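/- Let {uₖ} ⊂ Y be a biorthogonal system with functionals {ψₖ}, set Qₘ = q_{2m-1} + q_{2m} where qⱼ(x) = ψⱼ(x)uⱼ. Assume Σₘ Qₘ y = y for all y ∈ Y (convergence of 2D-block partial sums). If sup_j ‖qⱼ‖ < ∞ then {uₖ} is a Schauder basis of Y. -/

import Mathlib

theorem stmt2 {Y : Type*} [NormedAddCommGroup Y] [NormedSpace ℂ Y] [CompleteSpace Y]
    (u : ℕ → Y) (ψ : ℕ → Y →L[ℂ] ℂ)
    (hbi : ∀ k j, ψ k (u j) = if k = j then 1 else 0)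
    (hblock : ∀ y : Y, Filter.Tendsto
      (fun M => ∑ m ∈ Finset.range M, (ψ (2*m) y • u (2*m) + ψ (2*m+1) y • u (2*m+1)))
      Filter.atTop (nhds y))
    (T : ℝ) (hT : ∀ j (y : Y), ‖ψ j y • u j‖ ≤ T * ‖y‖) :
    ∀ y : Y, Filter.Tendsto (fun N => ∑ k ∈ Finset.range N, ψ k y • u k)
      Filter.atTop (nhds y) := by
  intro y
  set B : ℕ → Y := fun M => ∑ m ∈ Finset.range M,
      (ψ (2*m) y • u (2*m) + ψ (2*m+1) y • u (2*m+1)) with hBdef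
  set Q : ℕ → Y := fun M => ψ (2*M) y • u (2*M) + ψ (2*M+1) y • u (2*M+1) with hQdef
  have hBy : Filter.Tendsto B Filter.atTop (nhds y) := hblock y
  -- T ≥ 0
  have hu0 : u 0 ≠ 0 := by
    intro h
    have := hbi 0 0
    simp [h] at this
  have hT0 : 0 ≤ T := by
    have h := hT 0 (u 0)
    rw [hbi 0 0] at h
    simp at h
    nlinarith [norm_pos_iff.mpr hu0, h]
  -- Q M → 0
  have hQ0 : Filter.Tendsto Q Filter.atTop (nhds 0) := by
    have h1 : Filter.Tendsto (fun M => B (M+1) - B M) Filter.atTop (nhds (y - y)) :=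
      (hBy.comp (Filter.tendsto_add_atTop_nat 1)).sub hBy
    rw [sub_self] at h1
    convert h1 using 2 with M
    simp only [hBdef, hQdef, Finset.sum_range_succ]
    abel
  -- key estimate: ‖q_{2M} y‖ ≤ T ‖Q M‖
  have hkey : ∀ M : ℕ, ‖ψ (2*M) y • u (2*M)‖ ≤ T * ‖Q M‖ := by
    intro M
    have h := hT (2*M) (Q M)
    have hψ : ψ (2*M) (Q M) = ψ (2*M) y := by
      simp only [hQdef, map_add, map_smul, hbi]
      have : ¬ (2*M = 2*M+1) := by omega
      simp [this]
    rwa [hψ] at h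
  -- even partial sums
  have heven : ∀ M : ℕ, ∑ k ∈ Finset.range (2*M), ψ k y • u k = B M := by
    intro M
    induction M with
    | zero => simp [hBdef]
    | succ M ih =>
      have : 2*(M+1) = (2*M+1)+1 := by omega
      rw [this, Finset.sum_range_succ, Finset.sum_range_succ, ih]
      simp only [hBdef, hQdef, Finset.sum_range_succ]
      abel
  rw [tendsto_iff_norm_sub_tendsto_zero]
  have hg : Filter.Tendsto (fun M => ‖B M - y‖ + T * ‖Q M‖) Filter.atTop (nhds 0) := by
    have h1 : Filter.Tendsto (fun M => ‖B M - y‖) Filter.atTop (nhds 0) :=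
      (tendsto_iff_norm_sub_tendsto_zero.mp hBy)
    have h2 : Filter.Tendsto (fun M => T * ‖Q M‖) Filter.atTop (nhds (T * ‖(0:Y)‖)) :=
      (hQ0.norm.const_mul T)
    rw [norm_zero, mul_zero] at h2
    simpa using h1.add h2
  have hdiv : Filter.Tendsto (fun N : ℕ => N / 2) Filter.atTop Filter.atTop := by
    apply Filter.tendsto_atTop.mpr
    intro b
    filter_upwards [Filter.eventually_ge_atTop (2*b)] with n hn
    omega
  apply squeeze_zero (fun N => norm_nonneg _) _ (hg.comp hdiv)
  intro N
  rcases Nat.even_or_odd N with ⟨M, hM⟩ | ⟨M, hM⟩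
  · have hNd : N / 2 = M := by omega
    have : ∑ k ∈ Finset.range N, ψ k y • u k = B M := by
      rw [hM]; rw [show M + M = 2*M by omega]; exact heven M
    simp only [Function.comp, hNd, this]
    have : 0 ≤ T * ‖Q M‖ := mul_nonneg hT0 (norm_nonneg _)
    linarith
  · have hNd : N / 2 = M := by omega
    have hS : ∑ k ∈ Finset.range N, ψ k y • u k = B M + ψ (2*M) y • u (2*M) := by
      rw [hM, Finset.sum_range_succ, heven M]
    simp only [Function.comp, hNd, hS]
    calc ‖B M + ψ (2*M) y • u (2*M) - y‖
        = ‖(B M - y) + ψ (2*M) y • u (2*M)‖ := by congr 1; abel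
      _ ≤ ‖B M - y‖ + ‖ψ (2*M) y • u (2*M)‖ := norm_add_le _ _
      _ ≤ ‖B M - y‖ + T * ‖Q M‖ := by linarith [hkey M]
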